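/- Define d : ℝ⁴ → ℝ by d(y) = sqrt( (y₁−y₃)²/2 + y₂² + y₄² ) and let X = ∇d at points where d ≠ 0. Fix y ∈ ℝ⁴ with d(y) ≠ 0 and let v = (v₁,v₂,v₃,v₄) ∈ ℂ⁴. Set ζ = ( (y₁−y₃)/√2, y₂, y₄ ) ∈ ℝ³ and w = ( (v₁−v₃)/√2, v₂, v₄ ) ∈ ℂ³ (so ‖ζ‖ = d(y)). Then Σ_{j,k=1}^{4} ∂_j X^k(y) · 2·Re( v_j · conj(v_k) ) = (2/d(y)) · ( ‖w‖² − |⟨ζ, w⟩|² / ‖ζ‖² ), where ⟨ζ,w⟩ = Σ_i ζ_i w_i; in particular this quantity is nonnegative. -/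

import Mathlib

open Complex Real

noncomputable abbrev E4 := EuclideanSpace ℝ (Fin 4)

noncomputable def Qf (z : E4) : ℝ := (z 0 - z 2) ^ 2 / 2 + (z 1) ^ 2 + (z 3) ^ 2

noncomputable def LQ (z : E4) : E4 →L[ℝ] ℝ :=
  (z 0 - z 2) • (EuclideanSpace.proj 0 - EuclideanSpace.proj 2) +
    (2 * z 1) • EuclideanSpace.proj (1 : Fin 4) + (2 * z 3) • EuclideanSpace.proj (3 : Fin 4)

lemma LQ_apply (z u : E4) : LQ z u = (z 0 - z 2) * (u 0 - u 2) + 2 * z 1 * u 1 + 2 * z 3 * u 3 := by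
  simp only [LQ, ContinuousLinearMap.add_apply, ContinuousLinearMap.coe_smul',
    ContinuousLinearMap.coe_sub', Pi.smul_apply, Pi.sub_apply, PiLp.proj_apply,
    smul_eq_mul]

lemma hasFDerivAt_coord (i : Fin 4) (z : E4) :
    HasFDerivAt (fun z : E4 => z i) (EuclideanSpace.proj i : E4 →L[ℝ] ℝ) z :=
  ((EuclideanSpace.proj i : E4 →L[ℝ] ℝ)).hasFDerivAt.congr_of_eventuallyEq
    (Filter.Eventually.of_forall fun _ => rfl)

lemma hasFDerivAt_Qf (z : E4) : HasFDerivAt Qf (LQ z) z := by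
  have h0 : HasFDerivAt (fun z : E4 => z 0 - z 2)
      ((EuclideanSpace.proj 0 - EuclideanSpace.proj 2 : E4 →L[ℝ] ℝ)) z :=
    (hasFDerivAt_coord 0 z).sub (hasFDerivAt_coord 2 z)
  have h1 := hasFDerivAt_coord 1 z
  have h3 := hasFDerivAt_coord 3 z
  have H := (((h0.mul h0).mul_const (2:ℝ)⁻¹).add (h1.mul h1)).add (h3.mul h3)
  have hfun : Qf = fun z : E4 => (z 0 - z 2) * (z 0 - z 2) * (2:ℝ)⁻¹ + z 1 * z 1 + z 3 * z 3 := by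
    funext z; simp only [Qf]; ring
  rw [hfun]
  refine H.congr_fderiv ?_
  refine ContinuousLinearMap.ext fun u => ?_
  simp only [LQ, ContinuousLinearMap.add_apply, ContinuousLinearMap.coe_smul',
    ContinuousLinearMap.coe_sub', Pi.smul_apply, Pi.sub_apply, PiLp.proj_apply,
    smul_eq_mul]
  ring

lemma continuous_Qf : Continuous Qf :=
  continuous_iff_continuousAt.2 fun z => (hasFDerivAt_Qf z).differentiableAt.continuousAt

noncomputable def Ff (k : Fin 4) (z : E4) : ℝ :=
  LQ z (EuclideanSpace.single k 1) / (2 * Real.sqrt (Qf z))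

lemma hasFDerivAt_LQapp (e : E4) (z : E4) :
    HasFDerivAt (fun u : E4 => LQ u e) (LQ e) z :=
  (LQ e).hasFDerivAt.congr_of_eventuallyEq
    (Filter.Eventually.of_forall fun u => by show LQ u e = LQ e u; rw [LQ_apply, LQ_apply]; ring)

lemma fderiv_Ff_apply (k j : Fin 4) (z : E4) (hz : 0 < Qf z) :
    fderiv ℝ (Ff k) z (EuclideanSpace.single j 1) =
      LQ (EuclideanSpace.single k 1) (EuclideanSpace.single j 1) / (2 * Real.sqrt (Qf z)) -
        LQ z (EuclideanSpace.single k 1) * LQ z (EuclideanSpace.single j 1) /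
          (4 * Real.sqrt (Qf z) ^ 3) := by
  set s : ℝ := Real.sqrt (Qf z) with hsdef
  have hs : 0 < s := Real.sqrt_pos.2 hz
  have hne : 2 * s ≠ 0 := by positivity
  have hsqrt : HasFDerivAt (fun u : E4 => Real.sqrt (Qf u)) ((1 / (2 * s)) • LQ z) z :=
    (hasFDerivAt_Qf z).sqrt hz.ne'
  have h2s : HasFDerivAt (fun u : E4 => 2 * Real.sqrt (Qf u))
      ((2 : ℝ) • ((1 / (2 * s)) • LQ z)) z := hsqrt.const_mul 2
  have hg : HasFDerivAt (fun u : E4 => (2 * Real.sqrt (Qf u))⁻¹)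
      ((-((2 * s) ^ 2)⁻¹) • ((2 : ℝ) • ((1 / (2 * s)) • LQ z))) z :=
    (hasDerivAt_inv hne).comp_hasFDerivAt z h2s
  have hN := hasFDerivAt_LQapp (EuclideanSpace.single k 1) z
  have hF : HasFDerivAt (Ff k)
      ((LQ z (EuclideanSpace.single k 1)) •
          ((-((2 * s) ^ 2)⁻¹) • ((2 : ℝ) • ((1 / (2 * s)) • LQ z))) +
        ((2 * s)⁻¹) • LQ (EuclideanSpace.single k 1)) z := by
    have := hN.mul hg
    have hfe : Ff k = fun u : E4 =>
        LQ u (EuclideanSpace.single k 1) * (2 * Real.sqrt (Qf u))⁻¹ := by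
      funext u; rw [Ff, div_eq_mul_inv]
    rw [hfe]
    exact this
  rw [hF.fderiv]
  simp only [ContinuousLinearMap.add_apply, ContinuousLinearMap.coe_smul', Pi.smul_apply,
    smul_eq_mul]
  field_simp
  ring

lemma fderiv_X_eq (d : E4 → ℝ) (hd : ∀ z, d z = Real.sqrt (Qf z)) (X : Fin 4 → E4 → ℝ)
    (hX : ∀ k z, X k z = fderiv ℝ d z (EuclideanSpace.single k 1)) (k : Fin 4) (y : E4)
    (hy : 0 < Qf y) : fderiv ℝ (X k) y = fderiv ℝ (Ff k) y := by
  apply Filter.EventuallyEq.fderiv_eq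
  have hU : IsOpen {z : E4 | 0 < Qf z} := isOpen_lt continuous_const continuous_Qf
  filter_upwards [hU.mem_nhds hy] with z hz
  rw [hX k z, Ff]
  have hdz : HasFDerivAt d ((1 / (2 * Real.sqrt (Qf z))) • LQ z) z := by
    have h := (hasFDerivAt_Qf z).sqrt (ne_of_gt hz)
    have hfun : d = fun u => Real.sqrt (Qf u) := funext hd
    rw [hfun]; exact h
  rw [hdz.fderiv]
  simp only [ContinuousLinearMap.coe_smul', Pi.smul_apply, smul_eq_mul, one_div]
  rw [inv_mul_eq_div]

lemma normsq_eq (c : ℂ) : ‖c‖ ^ 2 = c.re ^ 2 + c.im ^ 2 := by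
  rw [Complex.sq_norm, Complex.normSq_apply]; ring

lemma Wsum (v : Fin 4 → ℂ) (w : Fin 3 → ℂ)
    (hw : w = ![(v 0 - v 2) / (Real.sqrt 2 : ℂ), v 1, v 3]) :
    (∑ i : Fin 3, ‖w i‖ ^ 2) =
      (((v 0).re - (v 2).re) ^ 2 + ((v 0).im - (v 2).im) ^ 2) / 2 +
        ((v 1).re ^ 2 + (v 1).im ^ 2) + ((v 3).re ^ 2 + (v 3).im ^ 2) := by
  subst hw
  rw [Fin.sum_univ_three]
  simp only [Matrix.cons_val_zero, Matrix.cons_val_one, Matrix.head_cons, Matrix.cons_val_two,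
    Matrix.tail_cons]
  rw [norm_div, div_pow, Complex.norm_real, Real.norm_eq_abs,
    _root_.abs_of_nonneg (Real.sqrt_nonneg 2), Real.sq_sqrt (by norm_num : (0:ℝ) ≤ 2)]
  simp only [normsq_eq, Complex.sub_re, Complex.sub_im]

lemma Zsum (a b c : ℝ) (v : Fin 4 → ℂ) (ζ : Fin 3 → ℝ) (w : Fin 3 → ℂ)
    (hζ : ζ = ![a / Real.sqrt 2, b, c])
    (hw : w = ![(v 0 - v 2) / (Real.sqrt 2 : ℂ), v 1, v 3]) :
    (∑ i : Fin 3, (ζ i : ℂ) * w i) =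
      ((a / 2 : ℝ) : ℂ) * (v 0 - v 2) + (b : ℂ) * v 1 + (c : ℂ) * v 3 := by
  subst hζ hw
  rw [Fin.sum_univ_three]
  simp only [Matrix.cons_val_zero, Matrix.cons_val_one, Matrix.head_cons, Matrix.cons_val_two,
    Matrix.tail_cons]
  have hr : ((Real.sqrt 2 : ℝ) : ℂ) * ((Real.sqrt 2 : ℝ) : ℂ) = 2 := by
    rw [← Complex.ofReal_mul, Real.mul_self_sqrt (by norm_num : (0:ℝ) ≤ 2)]
    norm_num
  push_cast
  rw [div_mul_div_comm, hr]
  ring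

lemma cauchy3 (ζ : Fin 3 → ℝ) (w : Fin 3 → ℂ) :
    ‖∑ i : Fin 3, (ζ i : ℂ) * w i‖ ^ 2 ≤
      (∑ i : Fin 3, ζ i ^ 2) * (∑ i : Fin 3, ‖w i‖ ^ 2) := by
  have hinner : (inner ℂ ((WithLp.equiv 2 (Fin 3 → ℂ)).symm fun i => (ζ i : ℂ))
      ((WithLp.equiv 2 (Fin 3 → ℂ)).symm fun i => w i) : ℂ) =
      ∑ i : Fin 3, (ζ i : ℂ) * w i := by
    rw [PiLp.inner_apply]
    refine Finset.sum_congr rfl fun i _ => ?_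
    simp [RCLike.inner_apply, Complex.conj_ofReal]
    ring
  have hnx : ‖((WithLp.equiv 2 (Fin 3 → ℂ)).symm fun i => (ζ i : ℂ))‖ ^ 2
      = ∑ i : Fin 3, ζ i ^ 2 := by
    rw [EuclideanSpace.norm_eq, Real.sq_sqrt (by positivity)]
    refine Finset.sum_congr rfl fun i _ => ?_
    simp [sq_abs]
  have hnw : ‖((WithLp.equiv 2 (Fin 3 → ℂ)).symm fun i => w i)‖ ^ 2
      = ∑ i : Fin 3, ‖w i‖ ^ 2 := by
    rw [EuclideanSpace.norm_eq, Real.sq_sqrt (by positivity)]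
    simp
  calc ‖∑ i : Fin 3, (ζ i : ℂ) * w i‖ ^ 2
      = ‖(inner ℂ ((WithLp.equiv 2 (Fin 3 → ℂ)).symm fun i => (ζ i : ℂ))
          ((WithLp.equiv 2 (Fin 3 → ℂ)).symm fun i => w i) : ℂ)‖ ^ 2 := by rw [hinner]
    _ ≤ (‖((WithLp.equiv 2 (Fin 3 → ℂ)).symm fun i => (ζ i : ℂ))‖ *
          ‖((WithLp.equiv 2 (Fin 3 → ℂ)).symm fun i => w i)‖) ^ 2 :=
        pow_le_pow_left₀ (norm_nonneg _) (norm_inner_le_norm (𝕜 := ℂ) _ _) 2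
    _ = (∑ i : Fin 3, ζ i ^ 2) * (∑ i : Fin 3, ‖w i‖ ^ 2) := by
        rw [mul_pow, hnx, hnw]

set_option maxHeartbeats 1000000 in
/-- **Positivity of the contraction `(∂_j X^k) σ_{jk}` for `X = ∇d`,
`d` the distance to the line `{(l,0,l,0)} ⊂ ℝ⁴`.** With
`ζ = ((y₁−y₃)/√2, y₂, y₄)` and `w = ((v₁−v₃)/√2, v₂, v₄)` (so `‖ζ‖ = d(y)`),
`Σ_{j,k} ∂_j X^k(y) ⬝ 2Re(v_j conj v_k) = (2/d)(‖w‖² − |⟨ζ,w⟩|²/‖ζ‖²) ≥ 0`. -/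
theorem hessian_dist_line_contraction_nonneg (d : EuclideanSpace ℝ (Fin 4) → ℝ)
    (hd : ∀ z : EuclideanSpace ℝ (Fin 4),
      d z = Real.sqrt ((z 0 - z 2) ^ 2 / 2 + (z 1) ^ 2 + (z 3) ^ 2))
    (X : Fin 4 → EuclideanSpace ℝ (Fin 4) → ℝ)
    (hX : ∀ (k : Fin 4) (z : EuclideanSpace ℝ (Fin 4)),
      X k z = fderiv ℝ d z (EuclideanSpace.single k 1))
    (y : EuclideanSpace ℝ (Fin 4)) (hy : d y ≠ 0) (v : Fin 4 → ℂ)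
    (ζ : Fin 3 → ℝ) (hζ : ζ = ![(y 0 - y 2) / Real.sqrt 2, y 1, y 3])
    (w : Fin 3 → ℂ) (hw : w = ![(v 0 - v 2) / (Real.sqrt 2 : ℂ), v 1, v 3]) :
    Real.sqrt (∑ i : Fin 3, ζ i ^ 2) = d y ∧
    (∑ j : Fin 4, ∑ k : Fin 4,
        fderiv ℝ (X k) y (EuclideanSpace.single j 1) *
          (2 * (v j * (starRingEnd ℂ) (v k)).re)) =
      2 / d y *
        ((∑ i : Fin 3, ‖w i‖ ^ 2) -
          ‖∑ i : Fin 3, (ζ i : ℂ) * w i‖ ^ 2 / ∑ i : Fin 3, ζ i ^ 2) ∧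
    0 ≤ 2 / d y *
        ((∑ i : Fin 3, ‖w i‖ ^ 2) -
          ‖∑ i : Fin 3, (ζ i : ℂ) * w i‖ ^ 2 / ∑ i : Fin 3, ζ i ^ 2) := by
  have hd' : ∀ z : E4, d z = Real.sqrt (Qf z) := hd
  have hQnn : ∀ z : E4, 0 ≤ Qf z := fun z => by
    have := sq_nonneg (z 0 - z 2); have := sq_nonneg (z 1); have := sq_nonneg (z 3)
    simp only [Qf]; linarith
  have hQy : 0 < Qf y := by
    rcases lt_or_eq_of_le (hQnn y) with h | h
    · exact h
    · exact absurd (by rw [hd' y, ← h, Real.sqrt_zero]) hy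
  set s : ℝ := Real.sqrt (Qf y) with hsdef
  have hs : 0 < s := Real.sqrt_pos.2 hQy
  have hs2 : s ^ 2 = Qf y := Real.sq_sqrt (hQnn y)
  have hdy : d y = s := hd' y
  -- ∑ ζ i ^ 2 = s ^ 2
  have hζsum : (∑ i : Fin 3, ζ i ^ 2) = s ^ 2 := by
    rw [hs2, hζ]
    simp only [Fin.sum_univ_three, Matrix.cons_val_zero, Matrix.cons_val_one, Matrix.head_cons,
      Matrix.cons_val_two, Matrix.tail_cons, div_pow, Real.sq_sqrt (by norm_num : (0:ℝ) ≤ 2)]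
    simp [Qf]
  have hc1 : Real.sqrt (∑ i : Fin 3, ζ i ^ 2) = d y := by
    rw [hζsum, hdy, Real.sqrt_sq hs.le]
  refine ⟨hc1, ?_, ?_⟩
  · have key : ∀ j k : Fin 4, fderiv ℝ (X k) y (EuclideanSpace.single j 1) =
        LQ (EuclideanSpace.single k 1) (EuclideanSpace.single j 1) / (2 * s) -
          LQ y (EuclideanSpace.single k 1) * LQ y (EuclideanSpace.single j 1) /
            (4 * s ^ 3) := by
      intro j k
      rw [fderiv_X_eq d hd' X hX k y hQy, fderiv_Ff_apply k j y hQy]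
    have hsum : (∑ j : Fin 4, ∑ k : Fin 4,
        fderiv ℝ (X k) y (EuclideanSpace.single j 1) *
          (2 * (v j * (starRingEnd ℂ) (v k)).re)) =
        ∑ j : Fin 4, ∑ k : Fin 4,
          (LQ (EuclideanSpace.single k 1) (EuclideanSpace.single j 1) / (2 * s) -
            LQ y (EuclideanSpace.single k 1) * LQ y (EuclideanSpace.single j 1) /
              (4 * s ^ 3)) * (2 * (v j * (starRingEnd ℂ) (v k)).re) :=
      Finset.sum_congr rfl fun j _ => Finset.sum_congr rfl fun k _ => by rw [key j k]
    rw [hsum, hdy, hζsum, Wsum v w hw, Zsum (y 0 - y 2) (y 1) (y 3) v ζ w hζ hw, normsq_eq]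
    simp only [Fin.sum_univ_four, LQ_apply, EuclideanSpace.single_apply,
      Complex.mul_re, Complex.mul_im, Complex.conj_re, Complex.conj_im,
      Complex.add_re, Complex.add_im, Complex.sub_re, Complex.sub_im,
      Complex.ofReal_re, Complex.ofReal_im]
    norm_num [Fin.isValue, show (2:Fin 4) ≠ 0 by decide, show (3:Fin 4) ≠ 0 by decide,
      show (2:Fin 4) ≠ 1 by decide, show (3:Fin 4) ≠ 1 by decide, show (0:Fin 4) ≠ 2 by decide,
      show (1:Fin 4) ≠ 2 by decide, show (3:Fin 4) ≠ 2 by decide, show (0:Fin 4) ≠ 3 by decide,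
      show (1:Fin 4) ≠ 3 by decide, show (2:Fin 4) ≠ 3 by decide]
    have hs0 : s ≠ 0 := ne_of_gt hs
    set a0 := (v 0).re; set b0 := (v 0).im; set a1 := (v 1).re; set b1 := (v 1).im
    set a2 := (v 2).re; set b2 := (v 2).im; set a3 := (v 3).re; set b3 := (v 3).im
    clear_value a0 b0 a1 b1 a2 b2 a3 b3
    field_simp
    ring
  · -- nonnegativity via Cauchy-Schwarz
    have hCS := cauchy3 ζ w
    have hS : (0:ℝ) < ∑ i : Fin 3, ζ i ^ 2 := by rw [hζsum]; positivity
    have hle : ‖∑ i : Fin 3, (ζ i : ℂ) * w i‖ ^ 2 / (∑ i : Fin 3, ζ i ^ 2) ≤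
        ∑ i : Fin 3, ‖w i‖ ^ 2 := by
      rw [div_le_iff₀ hS]
      linarith [hCS]
    have h2d : (0:ℝ) ≤ 2 / d y := by rw [hdy]; positivity
    exact mul_nonneg h2d (by linarith)
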